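/- arXiv:2209.08278 — 3 statements merged into one kernel-verified Lean document; each statement's English description precedes it below -/
import Mathlib

section
/- Let T > 0 and let f : [0,T] → L²(0,1) be continuously differentiable with derivative f'; write f_n(t) := ⟨f(t), φ_n⟩. Then for every t ∈ [0,T], Σ_{n≥1} λ_n | ∫₀ᵗ sin(√λ_n s) f_n(s) ds |² ≤ 3 ( ‖f(t)‖²_{L²(0,1)} + ‖f(0)‖²_{L²(0,1)} + T² · sup_{s ∈ [0,T]} ‖f'(s)‖²_{L²(0,1)} ). -/
open MeasureTheory Real Set

noncomputable section

/-- The measure on `(0,1)`, so that `Lp ℂ 2 μ01` is the complex Hilbert space `L²(0,1)`. -/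
abbrev μ01 : Measure ℝ := MeasureTheory.volume.restrict (Set.Ioo (0:ℝ) 1)

lemma cs_aux {t : ℝ} (ht : 0 ≤ t) {g : ℝ → ℝ} (hg : ContinuousOn g (Set.Icc 0 t))
    (hg0 : ∀ s ∈ Set.Icc (0:ℝ) t, 0 ≤ g s) :
    (∫ s in (0:ℝ)..t, g s) ^ 2 ≤ t * ∫ s in (0:ℝ)..t, g s ^ 2 := by
  set μ := MeasureTheory.volume.restrict (Set.Ioc (0:ℝ) t) with hμ
  have hsub : Set.Ioc (0:ℝ) t ⊆ Set.Icc 0 t := Set.Ioc_subset_Icc_self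
  have hgm : AEStronglyMeasurable g μ :=
    (hg.mono hsub).aestronglyMeasurable measurableSet_Ioc
  obtain ⟨C, hC⟩ := isCompact_Icc.exists_bound_of_continuousOn hg
  have hgae : 0 ≤ᵐ[μ] g :=
    (ae_restrict_iff' measurableSet_Ioc).2 (Filter.Eventually.of_forall fun s hs => hg0 s (hsub hs))
  have hmemg : MemLp g (ENNReal.ofReal 2) μ := by
    refine MemLp.of_bound hgm C ?_
    exact (ae_restrict_iff' measurableSet_Ioc).2
      (Filter.Eventually.of_forall fun s hs => hC s (hsub hs))
  have hmem1 : MemLp (fun _ : ℝ => (1:ℝ)) (ENNReal.ofReal 2) μ := memLp_const 1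
  have hpq : (2:ℝ).HolderConjugate 2 := Real.holderConjugate_iff.mpr ⟨one_lt_two, by norm_num⟩
  have key := MeasureTheory.integral_mul_le_Lp_mul_Lq_of_nonneg hpq
    (Filter.Eventually.of_forall fun _ => zero_le_one) hgae hmem1 hmemg
  simp only [one_mul, Real.one_rpow, Real.rpow_two, one_pow] at key
  have h1 : ∫ _ : ℝ, (1:ℝ) ∂μ = t := by
    simp [hμ, Real.volume_Ioc, ht]
  rw [h1] at key
  have hJ : 0 ≤ ∫ s, g s ^ 2 ∂μ := integral_nonneg fun s => sq_nonneg _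
  have hI : 0 ≤ ∫ s, g s ∂μ := integral_nonneg_of_ae hgae
  rw [intervalIntegral.integral_of_le ht, intervalIntegral.integral_of_le ht]
  calc (∫ s in Set.Ioc (0:ℝ) t, g s) ^ 2
      ≤ (t ^ (1/(2:ℝ)) * (∫ s in Set.Ioc (0:ℝ) t, g s ^ 2) ^ (1/(2:ℝ))) ^ 2 :=
        pow_le_pow_left₀ hI key 2
    _ = t * ∫ s in Set.Ioc (0:ℝ) t, g s ^ 2 := by
        rw [mul_pow, ← Real.rpow_natCast (t ^ (1/(2:ℝ))) 2, ← Real.rpow_natCast _ 2,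
          ← Real.rpow_mul ht, ← Real.rpow_mul hJ]
        norm_num
        exact Or.inl rfl

lemma parseval_hasSum {E : Type*} [NormedAddCommGroup E] [InnerProductSpace ℂ E]
    (b : HilbertBasis ℕ ℂ E) (x : E) :
    HasSum (fun n => ‖(inner ℂ x (b n) : ℂ)‖ ^ 2) (‖x‖ ^ 2) := by
  have h := (b.hasSum_inner_mul_inner x x).mapL Complex.reCLM
  convert h using 1
  · funext i
    simp only [ContinuousLinearMap.coe_comp', Function.comp_apply, Complex.reCLM_apply]
    rw [← inner_conj_symm x (b i), RCLike.norm_conj, Complex.sq_norm,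
      mul_comm, Complex.mul_conj, Complex.ofReal_re]
  · simp only [Complex.reCLM_apply]
    exact (inner_self_eq_norm_sq (𝕜 := ℂ) x).symm

end
open MeasureTheory Real Set

noncomputable section


-- per-n integration by parts bound
lemma perN (φn : Lp ℂ 2 μ01) (a : ℝ) (ha : 1 ≤ a)
    (T : ℝ) (hT : 0 < T)
    (f f' : ℝ → Lp ℂ 2 μ01)
    (hf : ∀ s ∈ Set.Icc (0:ℝ) T, HasDerivWithinAt f (f' s) (Set.Icc (0:ℝ) T) s)
    (hf' : ContinuousOn f' (Set.Icc 0 T))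
    (t : ℝ) (ht0 : 0 ≤ t) (htT : t ≤ T) :
    (a^2) * ‖∫ s in (0:ℝ)..t, (Real.sin (a * s) : ℂ) * (inner ℂ (f s) φn : ℂ)‖ ^ 2
      ≤ 3 * (‖(inner ℂ (f t) φn : ℂ)‖^2 + ‖(inner ℂ (f 0) φn : ℂ)‖^2
          + t * ∫ s in (0:ℝ)..t, ‖(inner ℂ (f' s) φn : ℂ)‖^2) := by
  have ha0 : (0:ℝ) < a := lt_of_lt_of_le one_pos ha
  set F : ℝ → ℂ := fun s => (inner ℂ (f s) φn : ℂ) with hFdef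
  set F' : ℝ → ℂ := fun s => (inner ℂ (f' s) φn : ℂ) with hF'def
  have hF : ∀ s ∈ Set.Icc (0:ℝ) T, HasDerivWithinAt F (F' s) (Set.Icc (0:ℝ) T) s := by
    intro s hs
    simpa using (hf s hs).inner ℂ (hasDerivWithinAt_const s _ φn)
  have hFc : ContinuousOn F (Set.Icc 0 T) := fun s hs => (hF s hs).continuousWithinAt
  have hF'c : ContinuousOn F' (Set.Icc 0 T) :=
    (Continuous.inner continuous_id continuous_const).comp_continuousOn hf'
  have hIccsub : Set.Icc (0:ℝ) t ⊆ Set.Icc 0 T := Set.Icc_subset_Icc le_rfl htT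
  have hFct : ContinuousOn F (Set.Icc 0 t) := hFc.mono hIccsub
  have hF'ct : ContinuousOn F' (Set.Icc 0 t) := hF'c.mono hIccsub
  -- derivative of the real auxiliary function
  have hv : ∀ s : ℝ, HasDerivAt (fun s => -Real.cos (a*s)/a) (Real.sin (a*s)) s := by
    intro s
    have h1 : HasDerivAt (fun s : ℝ => a * s) a s := by
      simpa using (hasDerivAt_id s).const_mul a
    have h2 := (Real.hasDerivAt_cos (a*s)).comp s h1
    have h3 := h2.neg.div_const a
    exact h3.congr_deriv (by field_simp [ha0.ne'])
  set G : ℝ → ℂ := fun s => ((-Real.cos (a*s)/a : ℝ) : ℂ) * F s with hGdef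
  set g' : ℝ → ℂ := fun s => (Real.sin (a*s) : ℂ) * F s + ((-Real.cos (a*s)/a : ℝ) : ℂ) * F' s
    with hg'def
  have hG : ∀ s ∈ Set.Ioo (0:ℝ) t, HasDerivWithinAt G (g' s) (Set.Ioi s) s := by
    intro s hs
    have hsT : s ∈ Set.Ioo (0:ℝ) T := ⟨hs.1, lt_of_lt_of_le hs.2 htT⟩
    have hFd : HasDerivAt F (F' s) s :=
      (hF s (Set.Ioo_subset_Icc_self hsT)).hasDerivAt (Icc_mem_nhds hsT.1 hsT.2)
    exact ((hv s).ofReal_comp.mul hFd).hasDerivWithinAt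
  have hGc : ContinuousOn G (Set.Icc 0 t) :=
    ((Complex.continuous_ofReal.comp
      ((Real.continuous_cos.comp (continuous_const.mul continuous_id)).neg.div_const a)).continuousOn).mul hFct
  have hcos : Continuous fun s : ℝ => ((-Real.cos (a*s)/a : ℝ) : ℂ) :=
    Complex.continuous_ofReal.comp
      ((Real.continuous_cos.comp (continuous_const.mul continuous_id)).neg.div_const a)
  have hsin : Continuous fun s : ℝ => ((Real.sin (a*s) : ℝ) : ℂ) :=
    Complex.continuous_ofReal.comp (Real.continuous_sin.comp (continuous_const.mul continuous_id))
  have huIcc : Set.uIcc (0:ℝ) t = Set.Icc 0 t := Set.uIcc_of_le ht0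
  have hi1 : IntervalIntegrable (fun s => (Real.sin (a*s) : ℂ) * F s) volume 0 t := by
    apply ContinuousOn.intervalIntegrable
    rw [huIcc]; exact (hsin.continuousOn).mul hFct
  have hi2 : IntervalIntegrable (fun s => ((-Real.cos (a*s)/a : ℝ) : ℂ) * F' s) volume 0 t := by
    apply ContinuousOn.intervalIntegrable
    rw [huIcc]; exact (hcos.continuousOn).mul hF'ct
  have hg'i : IntervalIntegrable g' volume 0 t := hi1.add hi2
  have hFTC := intervalIntegral.integral_eq_sub_of_hasDeriv_right_of_le ht0 hGc hG hg'i
  have hsplit : ∫ s in (0:ℝ)..t, g' s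
      = (∫ s in (0:ℝ)..t, (Real.sin (a*s) : ℂ) * F s)
        + ∫ s in (0:ℝ)..t, ((-Real.cos (a*s)/a : ℝ) : ℂ) * F' s :=
    intervalIntegral.integral_add hi1 hi2
  have hkey : (∫ s in (0:ℝ)..t, (Real.sin (a*s) : ℂ) * F s)
      = G t - G 0 - ∫ s in (0:ℝ)..t, ((-Real.cos (a*s)/a : ℝ) : ℂ) * F' s := by
    rw [← hFTC, hsplit]; ring
  -- norm bounds
  have hnormint : ‖∫ s in (0:ℝ)..t, ((-Real.cos (a*s)/a : ℝ) : ℂ) * F' s‖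
      ≤ (1/a) * ∫ s in (0:ℝ)..t, ‖F' s‖ := by
    calc ‖∫ s in (0:ℝ)..t, ((-Real.cos (a*s)/a : ℝ) : ℂ) * F' s‖
        ≤ ∫ s in (0:ℝ)..t, ‖((-Real.cos (a*s)/a : ℝ) : ℂ) * F' s‖ :=
          intervalIntegral.norm_integral_le_integral_norm ht0
      _ ≤ ∫ s in (0:ℝ)..t, (1/a) * ‖F' s‖ := by
          apply intervalIntegral.integral_mono_on ht0
          · apply ContinuousOn.intervalIntegrable; rw [huIcc]
            exact ((hcos.continuousOn).mul hF'ct).norm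
          · apply ContinuousOn.intervalIntegrable; rw [huIcc]
            exact (hF'ct.norm).const_smul (1/a)
          · intro s hs
            rw [norm_mul, Complex.norm_real]
            apply mul_le_mul_of_nonneg_right _ (norm_nonneg _)
            rw [Real.norm_eq_abs, abs_div, abs_of_pos ha0, div_le_div_iff_of_pos_right ha0]
            calc |(-Real.cos (a*s))| = |Real.cos (a*s)| := abs_neg _
              _ ≤ 1 := Real.abs_cos_le_one _
      _ = (1/a) * ∫ s in (0:ℝ)..t, ‖F' s‖ := by
          rw [intervalIntegral.integral_const_mul]
  have hGtn : ‖G t‖ ≤ (1/a) * ‖F t‖ := by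
    rw [hGdef]
    simp only [norm_mul, Complex.norm_real]
    apply mul_le_mul_of_nonneg_right _ (norm_nonneg _)
    rw [Real.norm_eq_abs, abs_div, abs_of_pos ha0, div_le_div_iff_of_pos_right ha0]
    calc |(-Real.cos (a*t))| = |Real.cos (a*t)| := abs_neg _
      _ ≤ 1 := Real.abs_cos_le_one _
  have hG0n : ‖G 0‖ ≤ (1/a) * ‖F 0‖ := by
    rw [hGdef]
    simp only [norm_mul, Complex.norm_real]
    apply mul_le_mul_of_nonneg_right _ (norm_nonneg _)
    rw [Real.norm_eq_abs, abs_div, abs_of_pos ha0, div_le_div_iff_of_pos_right ha0]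
    calc |(-Real.cos (a*0))| = |Real.cos (a*0)| := abs_neg _
      _ ≤ 1 := Real.abs_cos_le_one _
  set I := ∫ s in (0:ℝ)..t, ‖F' s‖ with hI
  have hItot : ‖∫ s in (0:ℝ)..t, (Real.sin (a*s) : ℂ) * F s‖
      ≤ (1/a) * (‖F t‖ + ‖F 0‖ + I) := by
    rw [hkey]
    calc ‖G t - G 0 - ∫ s in (0:ℝ)..t, ((-Real.cos (a*s)/a : ℝ) : ℂ) * F' s‖
        ≤ ‖G t - G 0‖ + ‖∫ s in (0:ℝ)..t, ((-Real.cos (a*s)/a : ℝ) : ℂ) * F' s‖ := norm_sub_le _ _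
      _ ≤ ‖G t‖ + ‖G 0‖ + ‖∫ s in (0:ℝ)..t, ((-Real.cos (a*s)/a : ℝ) : ℂ) * F' s‖ := by
          have := norm_sub_le (G t) (G 0); linarith
      _ ≤ (1/a) * ‖F t‖ + (1/a) * ‖F 0‖ + (1/a) * I := by
          gcongr  -- maybe: linarith [hGtn, hG0n, hnormint]
      _ = (1/a) * (‖F t‖ + ‖F 0‖ + I) := by ring
  have hCS : I ^ 2 ≤ t * ∫ s in (0:ℝ)..t, ‖F' s‖^2 := by
    have := cs_aux ht0 (g := fun s => ‖F' s‖) hF'ct.norm (fun s _ => norm_nonneg _)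
    simpa [hI] using this
  have hIzz : 0 ≤ I := intervalIntegral.integral_nonneg ht0 (fun s _ => norm_nonneg _)
  have hnorm := norm_nonneg (∫ s in (0:ℝ)..t, (Real.sin (a*s) : ℂ) * F s)
  have hFt := norm_nonneg (F t); have hF0 := norm_nonneg (F 0)
  have hsq : (a^2) * ‖∫ s in (0:ℝ)..t, (Real.sin (a*s) : ℂ) * F s‖^2
      ≤ (‖F t‖ + ‖F 0‖ + I)^2 := by
    have h2 := mul_le_mul_of_nonneg_left (pow_le_pow_left₀ hnorm hItot 2) (sq_nonneg a)
    calc (a^2) * ‖∫ s in (0:ℝ)..t, (Real.sin (a*s) : ℂ) * F s‖^2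
        ≤ a^2 * ((1/a) * (‖F t‖ + ‖F 0‖ + I))^2 := h2
      _ = (‖F t‖ + ‖F 0‖ + I)^2 := by field_simp
  calc (a^2) * ‖∫ s in (0:ℝ)..t, (Real.sin (a*s) : ℂ) * F s‖^2
      ≤ (‖F t‖ + ‖F 0‖ + I)^2 := hsq
    _ ≤ 3 * (‖F t‖^2 + ‖F 0‖^2 + I^2) := by nlinarith [sq_nonneg (‖F t‖ - ‖F 0‖), sq_nonneg (‖F t‖ - I), sq_nonneg (‖F 0‖ - I)]
    _ ≤ 3 * (‖F t‖^2 + ‖F 0‖^2 + t * ∫ s in (0:ℝ)..t, ‖F' s‖^2) := by linarith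

/-- The estimate of the term `J₁` in the proof of the theorem on the non-homogeneous
wave equation, obtained by integration by parts and Parseval's identity. -/
theorem stmt6
    (φ : HilbertBasis ℕ ℂ (Lp ℂ 2 μ01))
    (lam : ℕ → ℝ) (hlam : ∀ n, 1 ≤ lam n)
    (T : ℝ) (hT : 0 < T)
    (f f' : ℝ → Lp ℂ 2 μ01)
    (hf : ∀ s ∈ Set.Icc (0:ℝ) T, HasDerivWithinAt f (f' s) (Set.Icc (0:ℝ) T) s)
    (hf' : ContinuousOn f' (Set.Icc 0 T))
    (t : ℝ) (ht : t ∈ Set.Icc (0:ℝ) T) :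
    Summable (fun n => lam n *
        ‖∫ s in (0:ℝ)..t, (Real.sin (Real.sqrt (lam n) * s) : ℂ) * (inner ℂ (f s) (φ n) : ℂ)‖ ^ 2) ∧
    ∑' n, lam n *
        ‖∫ s in (0:ℝ)..t, (Real.sin (Real.sqrt (lam n) * s) : ℂ) * (inner ℂ (f s) (φ n) : ℂ)‖ ^ 2
      ≤ 3 * (‖f t‖ ^ 2 + ‖f 0‖ ^ 2 + T ^ 2 * ⨆ s : Set.Icc (0:ℝ) T, ‖f' s‖ ^ 2) := by
  obtain ⟨ht0, htT⟩ := ht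
  set S : ℝ := ⨆ s : Set.Icc (0:ℝ) T, ‖f' s‖ ^ 2 with hSdef
  have hcont2 : ContinuousOn (fun s => ‖f' s‖ ^ 2) (Set.Icc 0 T) := (hf'.norm).pow 2
  have hbdd : BddAbove (Set.range fun s : Set.Icc (0:ℝ) T => ‖f' s.1‖ ^ 2) := by
    have : (Set.range fun s : Set.Icc (0:ℝ) T => ‖f' s.1‖ ^ 2)
        = (fun s => ‖f' s‖ ^ 2) '' Set.Icc 0 T := by
      rw [show (fun s : Set.Icc (0:ℝ) T => ‖f' s.1‖ ^ 2) = (fun s => ‖f' s‖ ^ 2) ∘ Subtype.val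
        from rfl, Set.range_comp, Subtype.range_coe]
    rw [this]
    exact (isCompact_Icc.image_of_continuousOn hcont2).bddAbove
  have hSle : ∀ s ∈ Set.Icc (0:ℝ) T, ‖f' s‖ ^ 2 ≤ S := fun s hs => le_ciSup hbdd ⟨s, hs⟩
  have hS0 : 0 ≤ S := le_trans (by positivity) (hSle 0 ⟨le_refl 0, le_of_lt hT⟩)
  -- part sums
  set A : ℕ → ℝ := fun n => ‖(inner ℂ (f t) (φ n) : ℂ)‖ ^ 2 with hAdef
  set B : ℕ → ℝ := fun n => ‖(inner ℂ (f 0) (φ n) : ℂ)‖ ^ 2 with hBdef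
  set C : ℕ → ℝ := fun n => ∫ s in (0:ℝ)..t, ‖(inner ℂ (f' s) (φ n) : ℂ)‖ ^ 2 with hCdef
  have hA : HasSum A (‖f t‖ ^ 2) := parseval_hasSum φ (f t)
  have hB : HasSum B (‖f 0‖ ^ 2) := parseval_hasSum φ (f 0)
  have hC0 : ∀ n, 0 ≤ C n := fun n =>
    intervalIntegral.integral_nonneg ht0 (fun s _ => by positivity)
  have hF'cn : ∀ n : ℕ, ContinuousOn (fun s => ‖(inner ℂ (f' s) (φ n) : ℂ)‖ ^ 2) (Set.Icc 0 t) :=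
    fun n => (((Continuous.inner continuous_id continuous_const).comp_continuousOn
      (hf'.mono (Set.Icc_subset_Icc le_rfl htT))).norm).pow 2
  have hD2 : IntervalIntegrable (fun s => ‖f' s‖ ^ 2) volume 0 t := by
    apply ContinuousOn.intervalIntegrable
    rw [Set.uIcc_of_le ht0]
    exact hcont2.mono (Set.Icc_subset_Icc le_rfl htT)
  have hCsumbd : ∀ N : ℕ, ∑ n ∈ Finset.range N, C n ≤ ∫ s in (0:ℝ)..t, ‖f' s‖ ^ 2 := by
    intro N
    have heq : ∑ n ∈ Finset.range N, C n
        = ∫ s in (0:ℝ)..t, ∑ n ∈ Finset.range N, ‖(inner ℂ (f' s) (φ n) : ℂ)‖ ^ 2 := by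
      rw [hCdef, ← intervalIntegral.integral_finset_sum]
      intro n _
      apply ContinuousOn.intervalIntegrable
      rw [Set.uIcc_of_le ht0]; exact hF'cn n
    rw [heq]
    apply intervalIntegral.integral_mono_on ht0 _ hD2
    · intro s _
      have hb := φ.orthonormal.sum_inner_products_le (s := Finset.range N) (f' s)
      have : ∑ n ∈ Finset.range N, ‖(inner ℂ (f' s) (φ n) : ℂ)‖ ^ 2
          = ∑ n ∈ Finset.range N, ‖(inner ℂ (φ n) (f' s) : ℂ)‖ ^ 2 := by
        refine Finset.sum_congr rfl fun n _ => ?_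
        rw [norm_inner_symm]
      rw [this]; exact hb
    · apply ContinuousOn.intervalIntegrable
      rw [Set.uIcc_of_le ht0]
      exact continuousOn_finset_sum _ fun n _ => hF'cn n
  have hCsummable : Summable C := summable_of_sum_range_le hC0 hCsumbd
  have hCtsum : ∑' n, C n ≤ ∫ s in (0:ℝ)..t, ‖f' s‖ ^ 2 := Real.tsum_le_of_sum_range_le hC0 hCsumbd
  have hDle : (∫ s in (0:ℝ)..t, ‖f' s‖ ^ 2) ≤ t * S := by
    calc (∫ s in (0:ℝ)..t, ‖f' s‖ ^ 2) ≤ ∫ _ in (0:ℝ)..t, S := by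
          apply intervalIntegral.integral_mono_on ht0 hD2 intervalIntegrable_const
          exact fun s hs => hSle s (Set.Icc_subset_Icc le_rfl htT hs)
      _ = t * S := by simp
  -- per-n bound
  have key : ∀ n, lam n *
      ‖∫ s in (0:ℝ)..t, (Real.sin (Real.sqrt (lam n) * s) : ℂ) * (inner ℂ (f s) (φ n) : ℂ)‖ ^ 2
      ≤ 3 * (A n + B n + t * C n) := by
    intro n
    have hsq : Real.sqrt (lam n) ^ 2 = lam n :=
      Real.sq_sqrt (le_trans zero_le_one (hlam n))
    have := perN (φ n) (Real.sqrt (lam n)) (Real.one_le_sqrt.2 (hlam n)) T hT f f' hf hf' t ht0 htT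
    rwa [hsq] at this
  have hbound : HasSum (fun n => 3 * (A n + B n + t * C n))
      (3 * (‖f t‖ ^ 2 + ‖f 0‖ ^ 2 + t * ∑' n, C n)) :=
    ((hA.add hB).add ((hCsummable.hasSum).mul_left t)).mul_left 3
  have hterm0 : ∀ n, 0 ≤ lam n *
      ‖∫ s in (0:ℝ)..t, (Real.sin (Real.sqrt (lam n) * s) : ℂ) * (inner ℂ (f s) (φ n) : ℂ)‖ ^ 2 :=
    fun n => mul_nonneg (le_trans zero_le_one (hlam n)) (sq_nonneg _)
  have hsummable : Summable (fun n => lam n *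
      ‖∫ s in (0:ℝ)..t, (Real.sin (Real.sqrt (lam n) * s) : ℂ) * (inner ℂ (f s) (φ n) : ℂ)‖ ^ 2) :=
    Summable.of_nonneg_of_le hterm0 key hbound.summable
  refine ⟨hsummable, ?_⟩
  calc ∑' n, lam n *
        ‖∫ s in (0:ℝ)..t, (Real.sin (Real.sqrt (lam n) * s) : ℂ) * (inner ℂ (f s) (φ n) : ℂ)‖ ^ 2
      ≤ ∑' n, 3 * (A n + B n + t * C n) := Summable.tsum_le_tsum key hsummable hbound.summable
    _ = 3 * (‖f t‖ ^ 2 + ‖f 0‖ ^ 2 + t * ∑' n, C n) := hbound.tsum_eq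
    _ ≤ 3 * (‖f t‖ ^ 2 + ‖f 0‖ ^ 2 + T ^ 2 * S) := by
        have h1 : t * ∑' n, C n ≤ T ^ 2 * S := by
          have h2 : (∑' n, C n) ≤ t * S := le_trans hCtsum hDle
          have h3 : t * ∑' n, C n ≤ t * (t * S) :=
            mul_le_mul_of_nonneg_left h2 ht0
          have h4 : t * t ≤ T * T := mul_self_le_mul_self ht0 htT
          nlinarith [mul_le_mul_of_nonneg_right h4 hS0]
        linarith
end
end

section
/- Let T > 0 and let f : [0,T] → L²(0,1) be continuous with f_n(t) := ⟨f(t), φ_n⟩. For t ∈ [0,T] set u_n(t) := A_n cos(√λ_n t) + λ_n^{-1/2} B_n sin(√λ_n t) − λ_n^{-1/2} cos(√λ_n t) ∫₀ᵗ sin(√λ_n s) f_n(s) ds + λ_n^{-1/2} sin(√λ_n t) ∫₀ᵗ cos(√λ_n s) f_n(s) ds. Then for every t ∈ [0,T] the sequence (u_n(t))_{n≥1} is square-summable and the element u(t) := Σ_{n≥1} u_n(t) φ_n of L²(0,1) satisfies ‖u(t)‖²_{L²(0,1)} ≤ 4 ( Σ_{n≥1} |A_n|² + Σ_{n≥1}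 λ_n^{-1} |B_n|² + 2 T² sup_{s ∈ [0,T]} ‖f(s)‖²_{L²(0,1)} ). -/
set_option maxHeartbeats 1000000

open MeasureTheory Real Set
open scoped ENNReal

noncomputable section

/-- Cauchy–Schwarz for interval integrals of a continuous function. -/
lemma cs_interval {t : ℝ} (ht : 0 ≤ t) {g : ℝ → ℝ}
    (hg : ContinuousOn g (Set.Icc 0 t)) :
    (∫ s in (0:ℝ)..t, g s) ^ 2 ≤ t * ∫ s in (0:ℝ)..t, (g s) ^ 2 := by
  rcases eq_or_lt_of_le ht with rfl | ht'
  · simp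
  have huIcc : Set.uIcc (0:ℝ) t = Set.Icc 0 t := Set.uIcc_of_le ht
  have hgi : IntervalIntegrable g volume 0 t := by
    apply ContinuousOn.intervalIntegrable; rwa [huIcc]
  have hg2i : IntervalIntegrable (fun s => (g s)^2) volume 0 t := by
    apply ContinuousOn.intervalIntegrable; rw [huIcc]; exact (hg.pow 2)
  set c : ℝ := (∫ s in (0:ℝ)..t, g s) / t with hc
  have key : 0 ≤ ∫ s in (0:ℝ)..t, (g s - c) ^ 2 :=
    intervalIntegral.integral_nonneg ht (fun s _ => sq_nonneg _)
  have expand : ∫ s in (0:ℝ)..t, (g s - c) ^ 2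
      = (∫ s in (0:ℝ)..t, (g s)^2) - 2*c*(∫ s in (0:ℝ)..t, g s) + c^2 * t := by
    have : ∀ s, (g s - c)^2 = (g s)^2 - (2*c) * g s + c^2 := by intro s; ring
    simp_rw [this]
    rw [intervalIntegral.integral_add ((hg2i.sub (hgi.const_mul (2*c)))) intervalIntegrable_const,
      intervalIntegral.integral_sub hg2i (hgi.const_mul (2*c)),
      intervalIntegral.integral_const_mul, intervalIntegral.integral_const]
    simp only [smul_eq_mul]; ring
  rw [expand] at key
  have hct : c * t = ∫ s in (0:ℝ)..t, g s := by rw [hc, div_mul_cancel₀ _ ht'.ne']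
  nlinarith [sq_nonneg c, ht'.le]

/-- Estimate (es-nh1) for the Duhamel series solution of the non-homogeneous
wave equation, in Fourier-coefficient form. -/
theorem stmt9
    (φ : HilbertBasis ℕ ℂ (Lp ℂ 2 μ01))
    (lam : ℕ → ℝ) (hlam : ∀ n, 1 ≤ lam n)
    (u₀ u₁ : Lp ℂ 2 μ01)
    (A B : ℕ → ℂ)
    (hA : ∀ n, A n = (inner ℂ u₀ (φ n) : ℂ))
    (hB : ∀ n, B n = (inner ℂ u₁ (φ n) : ℂ))
    (T : ℝ) (hT : 0 < T)
    (f : ℝ → Lp ℂ 2 μ01) (hf : ContinuousOn f (Set.Icc 0 T))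
    (U : ℕ → ℝ → ℂ)
    (hU : ∀ n t, U n t =
      A n * (Real.cos (Real.sqrt (lam n) * t) : ℂ)
      + ((Real.sqrt (lam n) : ℂ))⁻¹ * B n * (Real.sin (Real.sqrt (lam n) * t) : ℂ)
      - ((Real.sqrt (lam n) : ℂ))⁻¹ * (Real.cos (Real.sqrt (lam n) * t) : ℂ)
          * (∫ s in (0:ℝ)..t, (Real.sin (Real.sqrt (lam n) * s) : ℂ) * (inner ℂ (f s) (φ n) : ℂ))
      + ((Real.sqrt (lam n) : ℂ))⁻¹ * (Real.sin (Real.sqrt (lam n) * t) : ℂ)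
          * (∫ s in (0:ℝ)..t, (Real.cos (Real.sqrt (lam n) * s) : ℂ) * (inner ℂ (f s) (φ n) : ℂ)))
    (t : ℝ) (ht : t ∈ Set.Icc (0:ℝ) T) :
    Summable (fun n => ‖U n t‖ ^ 2) ∧
    ‖∑' n, U n t • φ n‖ ^ 2
      ≤ 4 * ((∑' n, ‖A n‖ ^ 2) + (∑' n, (lam n)⁻¹ * ‖B n‖ ^ 2)
          + 2 * T ^ 2 * ⨆ s : Set.Icc (0:ℝ) T, ‖f s‖ ^ 2) := by
  obtain ⟨ht0, htT⟩ := ht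
  set r : ℕ → ℝ := fun n => Real.sqrt (lam n) with hrdef
  have hlam0 : ∀ n, (0:ℝ) < lam n := fun n => lt_of_lt_of_le one_pos (hlam n)
  have hr1 : ∀ n, 1 ≤ r n := fun n => by
    have := Real.sqrt_le_sqrt (hlam n)
    simpa [hrdef] using this
  have hr0 : ∀ n, 0 < r n := fun n => lt_of_lt_of_le one_pos (hr1 n)
  have hrinv1 : ∀ n, (r n)⁻¹ ≤ 1 := fun n => inv_le_one_of_one_le₀ (hr1 n)
  have hrinv0 : ∀ n, 0 ≤ (r n)⁻¹ := fun n => inv_nonneg.2 (hr0 n).le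
  have hrsq : ∀ n, ((r n)⁻¹)^2 = (lam n)⁻¹ := fun n => by
    rw [inv_pow, hrdef]
    simp [Real.sq_sqrt (hlam0 n).le]
  have hnrinv : ∀ n, ‖((r n : ℝ) : ℂ)⁻¹‖ = (r n)⁻¹ := fun n => by
    rw [norm_inv, Complex.norm_real, Real.norm_eq_abs, abs_of_pos (hr0 n)]
  -- Fourier coefficients of f
  set fn : ℕ → ℝ → ℂ := fun n s => (inner ℂ (f s) (φ n) : ℂ) with hfndef
  have hsub : Set.Icc (0:ℝ) t ⊆ Set.Icc 0 T := Set.Icc_subset_Icc_right htT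
  have huI : Set.uIcc (0:ℝ) t = Set.Icc 0 t := Set.uIcc_of_le ht0
  have hfn_cont : ∀ n, ContinuousOn (fn n) (Set.Icc 0 T) := by
    intro n
    have hin : Continuous (fun x : Lp ℂ 2 μ01 => (inner ℂ x (φ n) : ℂ)) :=
      continuous_inner.comp (continuous_id.prodMk continuous_const)
    exact hin.comp_continuousOn hf
  -- interval integrability of all integrands on [0,t]
  have htrig_sin : ∀ n, Continuous (fun s : ℝ => ((Real.sin (r n * s) : ℝ) : ℂ)) := fun n =>
    Complex.continuous_ofReal.comp (Real.continuous_sin.comp (continuous_const.mul continuous_id))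
  have htrig_cos : ∀ n, Continuous (fun s : ℝ => ((Real.cos (r n * s) : ℝ) : ℂ)) := fun n =>
    Complex.continuous_ofReal.comp (Real.continuous_cos.comp (continuous_const.mul continuous_id))
  have hint_fn_norm : ∀ n, IntervalIntegrable (fun s => ‖fn n s‖) volume 0 t := by
    intro n
    apply ContinuousOn.intervalIntegrable
    rw [huI]; exact ((hfn_cont n).mono hsub).norm
  have hint_fn_sq : ∀ n, IntervalIntegrable (fun s => ‖fn n s‖^2) volume 0 t := by
    intro n
    apply ContinuousOn.intervalIntegrable
    rw [huI]; exact (((hfn_cont n).mono hsub).norm.pow 2)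
  have hint_f_sq : IntervalIntegrable (fun s => ‖f s‖^2) volume 0 t := by
    apply ContinuousOn.intervalIntegrable
    rw [huI]; exact ((hf.mono hsub).norm.pow 2)
  -- the two Duhamel integrals
  set I : ℕ → ℂ := fun n => ∫ s in (0:ℝ)..t, ((Real.sin (r n * s) : ℝ) : ℂ) * fn n s with hIdef
  set J : ℕ → ℂ := fun n => ∫ s in (0:ℝ)..t, ((Real.cos (r n * s) : ℝ) : ℂ) * fn n s with hJdef
  have hint_sinfn : ∀ n,
      IntervalIntegrable (fun s => ((Real.sin (r n * s) : ℝ) : ℂ) * fn n s) volume 0 t := by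
    intro n
    apply ContinuousOn.intervalIntegrable
    rw [huI]
    exact ((htrig_sin n).continuousOn).mul ((hfn_cont n).mono hsub)
  have hint_cosfn : ∀ n,
      IntervalIntegrable (fun s => ((Real.cos (r n * s) : ℝ) : ℂ) * fn n s) volume 0 t := by
    intro n
    apply ContinuousOn.intervalIntegrable
    rw [huI]
    exact ((htrig_cos n).continuousOn).mul ((hfn_cont n).mono hsub)
  -- norm bounds for the integrals
  have habs_sin : ∀ x : ℝ, ‖((Real.sin x : ℝ) : ℂ)‖ ≤ 1 := fun x => by
    rw [Complex.norm_real, Real.norm_eq_abs]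
    exact abs_le.2 ⟨Real.neg_one_le_sin x, Real.sin_le_one x⟩
  have habs_cos : ∀ x : ℝ, ‖((Real.cos x : ℝ) : ℂ)‖ ≤ 1 := fun x => by
    rw [Complex.norm_real, Real.norm_eq_abs]
    exact abs_le.2 ⟨Real.neg_one_le_cos x, Real.cos_le_one x⟩
  have hInorm : ∀ n, ‖I n‖ ≤ ∫ s in (0:ℝ)..t, ‖fn n s‖ := by
    intro n
    calc ‖I n‖ ≤ ∫ s in (0:ℝ)..t, ‖((Real.sin (r n * s) : ℝ) : ℂ) * fn n s‖ :=
          intervalIntegral.norm_integral_le_integral_norm ht0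
      _ ≤ ∫ s in (0:ℝ)..t, ‖fn n s‖ := by
          apply intervalIntegral.integral_mono_on ht0 ((hint_sinfn n).norm) (hint_fn_norm n)
          intro s _
          rw [norm_mul]
          exact mul_le_of_le_one_left (norm_nonneg _) (habs_sin _)
  have hJnorm : ∀ n, ‖J n‖ ≤ ∫ s in (0:ℝ)..t, ‖fn n s‖ := by
    intro n
    calc ‖J n‖ ≤ ∫ s in (0:ℝ)..t, ‖((Real.cos (r n * s) : ℝ) : ℂ) * fn n s‖ :=
          intervalIntegral.norm_integral_le_integral_norm ht0
      _ ≤ ∫ s in (0:ℝ)..t, ‖fn n s‖ := by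
          apply intervalIntegral.integral_mono_on ht0 ((hint_cosfn n).norm) (hint_fn_norm n)
          intro s _
          rw [norm_mul]
          exact mul_le_of_le_one_left (norm_nonneg _) (habs_cos _)
  set G : ℕ → ℝ := fun n => ∫ s in (0:ℝ)..t, ‖fn n s‖^2 with hGdef
  have hCS : ∀ n, (∫ s in (0:ℝ)..t, ‖fn n s‖)^2 ≤ t * G n := fun n =>
    cs_interval ht0 ((hfn_cont n).mono hsub).norm
  have hInn : ∀ n, 0 ≤ ∫ s in (0:ℝ)..t, ‖fn n s‖ := fun n =>
    intervalIntegral.integral_nonneg ht0 (fun s _ => norm_nonneg _)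
  have hI2 : ∀ n, ‖I n‖^2 ≤ t * G n := fun n =>
    le_trans (pow_le_pow_left₀ (norm_nonneg _) (hInorm n) 2) (hCS n)
  have hJ2 : ∀ n, ‖J n‖^2 ≤ t * G n := fun n =>
    le_trans (pow_le_pow_left₀ (norm_nonneg _) (hJnorm n) 2) (hCS n)
  -- summability of G and bound on its sum
  have hG0 : ∀ n, 0 ≤ G n := fun n =>
    intervalIntegral.integral_nonneg ht0 (fun s _ => sq_nonneg _)
  set K : ℝ := ∫ s in (0:ℝ)..t, ‖f s‖^2 with hKdef
  have hpartial : ∀ N, ∑ n ∈ Finset.range N, G n ≤ K := by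
    intro N
    rw [hGdef]
    dsimp only
    rw [← intervalIntegral.integral_finset_sum (fun i _ => hint_fn_sq i)]
    have hsumint : IntervalIntegrable (fun s => ∑ i ∈ Finset.range N, ‖fn i s‖^2) volume 0 t := by
      apply ContinuousOn.intervalIntegrable
      rw [huI]
      exact continuousOn_finset_sum _ (fun i _ => (((hfn_cont i).mono hsub).norm.pow 2))
    apply intervalIntegral.integral_mono_on ht0 hsumint hint_f_sq
    intro s hs
    have hb := (φ.orthonormal).sum_inner_products_le (f s) (s := Finset.range N)
    have heqs : ∑ i ∈ Finset.range N, ‖fn i s‖^2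
        = ∑ i ∈ Finset.range N, ‖(inner ℂ (φ i) (f s) : ℂ)‖^2 :=
      Finset.sum_congr rfl (fun i _ => by rw [hfndef]; exact congrArg (· ^ 2) (norm_inner_symm _ _))
    rw [heqs]
    exact hb
  have hGsum : Summable G := summable_of_sum_range_le hG0 hpartial
  have hGts : ∑' n, G n ≤ K := Summable.tsum_le_of_sum_range_le hGsum hpartial
  -- the sup M and bound K ≤ t * M
  set M : ℝ := ⨆ s : Set.Icc (0:ℝ) T, ‖f s‖ ^ 2 with hMdef
  have hbdd : BddAbove (Set.range fun s : Set.Icc (0:ℝ) T => ‖f (↑s)‖^2) := by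
    have himg : BddAbove ((fun s => ‖f s‖^2) '' Set.Icc (0:ℝ) T) :=
      (isCompact_Icc.image_of_continuousOn (hf.norm.pow 2)).bddAbove
    rwa [show (fun s : Set.Icc (0:ℝ) T => ‖f (↑s)‖^2)
        = (fun s => ‖f s‖^2) ∘ (Subtype.val) from rfl, Set.range_comp, Subtype.range_coe]
  have hMle : ∀ s ∈ Set.Icc (0:ℝ) T, ‖f s‖^2 ≤ M := fun s hs =>
    le_ciSup hbdd (⟨s, hs⟩ : Set.Icc (0:ℝ) T)
  have hM0 : 0 ≤ M := le_trans (sq_nonneg _) (hMle 0 ⟨le_rfl, hT.le⟩)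
  have hK : K ≤ t * M := by
    have : K ≤ ∫ _ in (0:ℝ)..t, M := by
      apply intervalIntegral.integral_mono_on ht0 hint_f_sq intervalIntegrable_const
      exact fun s hs => hMle s (hsub hs)
    simpa [intervalIntegral.integral_const, smul_eq_mul] using this
  -- per-coefficient bound
  have hUb : ∀ n, ‖U n t‖^2
      ≤ 4 * (‖A n‖^2 + (lam n)⁻¹ * ‖B n‖^2 + ‖I n‖^2 + ‖J n‖^2) := by
    intro n
    have hrw : U n t = A n * ((Real.cos (r n * t) : ℝ) : ℂ)
        + ((r n : ℝ) : ℂ)⁻¹ * B n * ((Real.sin (r n * t) : ℝ) : ℂ)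
        - ((r n : ℝ) : ℂ)⁻¹ * ((Real.cos (r n * t) : ℝ) : ℂ) * I n
        + ((r n : ℝ) : ℂ)⁻¹ * ((Real.sin (r n * t) : ℝ) : ℂ) * J n := hU n t
    have h1 : ‖A n * ((Real.cos (r n * t) : ℝ) : ℂ)‖ ≤ ‖A n‖ := by
      rw [norm_mul]
      exact mul_le_of_le_one_right (norm_nonneg _) (habs_cos _)
    have h2 : ‖((r n : ℝ) : ℂ)⁻¹ * B n * ((Real.sin (r n * t) : ℝ) : ℂ)‖
        ≤ (r n)⁻¹ * ‖B n‖ := by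
      rw [norm_mul, norm_mul, hnrinv n]
      calc (r n)⁻¹ * ‖B n‖ * ‖((Real.sin (r n * t) : ℝ) : ℂ)‖ ≤ (r n)⁻¹ * ‖B n‖ * 1 := by
            apply mul_le_mul_of_nonneg_left (habs_sin _)
            positivity
        _ = (r n)⁻¹ * ‖B n‖ := by ring
    have h3 : ‖((r n : ℝ) : ℂ)⁻¹ * ((Real.cos (r n * t) : ℝ) : ℂ) * I n‖ ≤ ‖I n‖ := by
      rw [norm_mul, norm_mul, hnrinv n]
      exact mul_le_of_le_one_left (norm_nonneg _)
        (mul_le_one₀ (hrinv1 n) (norm_nonneg _) (habs_cos _))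
    have h4 : ‖((r n : ℝ) : ℂ)⁻¹ * ((Real.sin (r n * t) : ℝ) : ℂ) * J n‖ ≤ ‖J n‖ := by
      rw [norm_mul, norm_mul, hnrinv n]
      exact mul_le_of_le_one_left (norm_nonneg _)
        (mul_le_one₀ (hrinv1 n) (norm_nonneg _) (habs_sin _))
    have htri : ‖U n t‖ ≤ ‖A n‖ + (r n)⁻¹ * ‖B n‖ + ‖I n‖ + ‖J n‖ := by
      rw [hrw]
      refine le_trans (norm_add_le _ _) ?_
      refine add_le_add (le_trans (norm_sub_le _ _) ?_) h4
      exact add_le_add (le_trans (norm_add_le _ _) (add_le_add h1 h2)) h3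
    have hsq : ‖U n t‖^2 ≤ (‖A n‖ + (r n)⁻¹ * ‖B n‖ + ‖I n‖ + ‖J n‖)^2 :=
      pow_le_pow_left₀ (norm_nonneg _) htri 2
    have hBsq : ((r n)⁻¹ * ‖B n‖)^2 = (lam n)⁻¹ * ‖B n‖^2 := by
      rw [mul_pow, hrsq n]
    nlinarith [sq_nonneg (‖A n‖ - (r n)⁻¹ * ‖B n‖), sq_nonneg (‖A n‖ - ‖I n‖),
      sq_nonneg (‖A n‖ - ‖J n‖), sq_nonneg ((r n)⁻¹ * ‖B n‖ - ‖I n‖),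
      sq_nonneg ((r n)⁻¹ * ‖B n‖ - ‖J n‖), sq_nonneg (‖I n‖ - ‖J n‖)]
  -- summability of the coefficient series
  have h2r : (2:ℝ≥0∞).toReal = 2 := by simp
  have hSA : Summable (fun n => ‖A n‖^2) := by
    have hs := (memℓp_gen_iff (by norm_num [h2r] : (0:ℝ) < (2:ℝ≥0∞).toReal)).1
      (lp.memℓp (φ.repr u₀))
    refine hs.congr (fun n => ?_)
    rw [h2r, Real.rpow_two, hA n, HilbertBasis.repr_apply_apply, norm_inner_symm]
  have hSB' : Summable (fun n => ‖B n‖^2) := by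
    have hs := (memℓp_gen_iff (by norm_num [h2r] : (0:ℝ) < (2:ℝ≥0∞).toReal)).1
      (lp.memℓp (φ.repr u₁))
    refine hs.congr (fun n => ?_)
    rw [h2r, Real.rpow_two, hB n, HilbertBasis.repr_apply_apply, norm_inner_symm]
  have hSB : Summable (fun n => (lam n)⁻¹ * ‖B n‖^2) := by
    refine Summable.of_nonneg_of_le (fun n => mul_nonneg (inv_nonneg.2 (hlam0 n).le) (sq_nonneg _)) (fun n => ?_) hSB'
    have h1 : (lam n)⁻¹ ≤ 1 := inv_le_one_of_one_le₀ (hlam n)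
    exact mul_le_of_le_one_left (sq_nonneg _) h1
  have hSI : Summable (fun n => ‖I n‖^2) :=
    Summable.of_nonneg_of_le (fun n => sq_nonneg _) hI2 (hGsum.mul_left t)
  have hSJ : Summable (fun n => ‖J n‖^2) :=
    Summable.of_nonneg_of_le (fun n => sq_nonneg _) hJ2 (hGsum.mul_left t)
  have hS4 : Summable (fun n => 4 * (‖A n‖^2 + (lam n)⁻¹ * ‖B n‖^2 + ‖I n‖^2 + ‖J n‖^2)) :=
    (((hSA.add hSB).add hSI).add hSJ).mul_left 4
  have hSU : Summable (fun n => ‖U n t‖^2) :=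
    Summable.of_nonneg_of_le (fun n => sq_nonneg _) hUb hS4
  refine ⟨hSU, ?_⟩
  -- Parseval: the norm of the sum is the ℓ² norm of the coefficients
  have hmemU : Memℓp (fun n => U n t) 2 := by
    apply memℓp_gen
    refine hSU.congr (fun n => ?_)
    rw [h2r, Real.rpow_two]
  set c : lp (fun _ : ℕ => ℂ) 2 := ⟨fun n => U n t, hmemU⟩ with hcdef
  have hhs : HasSum (fun n => U n t • φ n) (φ.repr.symm c) := φ.hasSum_repr_symm c
  have heq : (∑' n, U n t • φ n) = φ.repr.symm c := hhs.tsum_eq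
  have hnorm : ‖∑' n, U n t • φ n‖^2 = ∑' n, ‖U n t‖^2 := by
    rw [heq, LinearIsometryEquiv.norm_map]
    have := lp.norm_rpow_eq_tsum (p := 2) (by norm_num [h2r]) c
    rw [h2r] at this
    rw [← Real.rpow_two, this]
    exact tsum_congr (fun n => by rw [Real.rpow_two])
  rw [hnorm]
  -- final chain of estimates
  have hIts : ∑' n, ‖I n‖^2 ≤ T^2 * M := by
    calc ∑' n, ‖I n‖^2 ≤ ∑' n, t * G n := Summable.tsum_le_tsum hI2 hSI (hGsum.mul_left t)
      _ = t * ∑' n, G n := tsum_mul_left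
      _ ≤ T^2 * M := by
          have h1 : t * ∑' n, G n ≤ t * K := mul_le_mul_of_nonneg_left hGts ht0
          have h2 : t * K ≤ t * (t * M) := mul_le_mul_of_nonneg_left hK ht0
          have hT2 : t * t ≤ T * T := mul_le_mul htT htT ht0 hT.le
          nlinarith [mul_le_mul_of_nonneg_right hT2 hM0]
  have hJts : ∑' n, ‖J n‖^2 ≤ T^2 * M := by
    calc ∑' n, ‖J n‖^2 ≤ ∑' n, t * G n := Summable.tsum_le_tsum hJ2 hSJ (hGsum.mul_left t)
      _ = t * ∑' n, G n := tsum_mul_left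
      _ ≤ T^2 * M := by
          have h1 : t * ∑' n, G n ≤ t * K := mul_le_mul_of_nonneg_left hGts ht0
          have h2 : t * K ≤ t * (t * M) := mul_le_mul_of_nonneg_left hK ht0
          have hT2 : t * t ≤ T * T := mul_le_mul htT htT ht0 hT.le
          nlinarith [mul_le_mul_of_nonneg_right hT2 hM0]
  calc ∑' n, ‖U n t‖^2
      ≤ ∑' n, 4 * (‖A n‖^2 + (lam n)⁻¹ * ‖B n‖^2 + ‖I n‖^2 + ‖J n‖^2) :=
        Summable.tsum_le_tsum hUb hSU hS4
    _ = 4 * ((∑' n, ‖A n‖^2) + (∑' n, (lam n)⁻¹ * ‖B n‖^2)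
          + (∑' n, ‖I n‖^2) + (∑' n, ‖J n‖^2)) := by
        rw [tsum_mul_left, Summable.tsum_add ((hSA.add hSB).add hSI) hSJ,
          Summable.tsum_add (hSA.add hSB) hSI, Summable.tsum_add hSA hSB]
    _ ≤ 4 * ((∑' n, ‖A n‖^2) + (∑' n, (lam n)⁻¹ * ‖B n‖^2) + 2 * T^2 * M) := by
        nlinarith [hIts, hJts]
end
end

section
/- Let T > 0 and let f : [0,T] → L²(0,1) be continuous with f_n(t) := ⟨f(t), φ_n⟩, and assume Σ_{n≥1} λ_n |A_n|² < ∞. For t ∈ [0,T] set v_n(t) := −√λ_n A_n sin(√λ_n t) + B_n cos(√λ_n t) + sin(√λ_n t) ∫₀ᵗ sin(√λ_n s) f_n(s) ds + cos(√λ_n t) ∫₀ᵗ cos(√λ_n s) f_n(s) ds. Then for every t ∈ [0,T] the sequence (v_n(t))_{n≥1} is square-summable and the element v(t) := Σ_{n≥1} v_n(t) φ_n of L²(0,1) satisfies ‖v(t)‖²_{L²(0,1)} ≤ 4 ( Σ_{n≥1} λ_n |A_n|² + Σ_{n≥1} |B_n|² + 2 T² sup_{s ∈ [0,T]} ‖f(s)‖²_{L²(0,1)}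 ). -/
set_option maxHeartbeats 1000000
open MeasureTheory Real Set

noncomputable section

lemma cs_sq_integral_le {t : ℝ} (ht : 0 ≤ t) {h : ℝ → ℝ}
    (hc : ContinuousOn h (Set.Icc 0 t)) (hpos : ∀ s, 0 ≤ h s) :
    (∫ s in (0:ℝ)..t, h s) ^ 2 ≤ t * ∫ s in (0:ℝ)..t, h s ^ 2 := by
  rw [intervalIntegral.integral_of_le ht, intervalIntegral.integral_of_le ht]
  set μ := MeasureTheory.volume.restrict (Set.Ioc (0:ℝ) t) with hμ
  haveI : IsFiniteMeasure μ := by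
    constructor
    rw [hμ, Measure.restrict_apply_univ, Real.volume_Ioc]
    exact ENNReal.ofReal_lt_top
  obtain ⟨C, hC⟩ := isCompact_Icc.exists_bound_of_continuousOn hc
  have hmeas : AEStronglyMeasurable h μ :=
    (hc.mono Set.Ioc_subset_Icc_self).aestronglyMeasurable measurableSet_Ioc
  have hbd : ∀ᵐ x ∂μ, ‖h x‖ ≤ C := by
    rw [hμ]
    filter_upwards [ae_restrict_mem measurableSet_Ioc] with x hx
    exact hC x (Set.Ioc_subset_Icc_self hx)
  have hmem : MemLp h (ENNReal.ofReal 2) μ := MemLp.of_bound hmeas C hbd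
  have hmem1 : MemLp (fun _ : ℝ => (1:ℝ)) (ENNReal.ofReal 2) μ := memLp_const 1
  have hpq : Real.HolderConjugate 2 2 := Real.HolderConjugate.two_two
  have H := integral_mul_le_Lp_mul_Lq_of_nonneg (μ := μ) hpq
    (Filter.Eventually.of_forall hpos) (Filter.Eventually.of_forall fun _ => zero_le_one)
    hmem hmem1
  simp only [mul_one, one_pow] at H
  have h2 : ∀ x : ℝ, x ^ (2:ℝ) = x ^ 2 := fun x => by
    rw [show (2:ℝ) = ((2:ℕ):ℝ) by norm_num, Real.rpow_natCast]
  simp only [h2, one_pow] at H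
  have hint1 : ∫ _ : ℝ, (1:ℝ) ∂μ = t := by
    simp [hμ, Real.volume_Ioc, ht]
  rw [hint1] at H
  have hI2 : 0 ≤ ∫ s, h s ^ 2 ∂μ := integral_nonneg fun s => sq_nonneg _
  have hs1 := Real.sq_sqrt hI2
  have hs2 := Real.sq_sqrt ht
  have hr1 : (∫ s, h s ^ 2 ∂μ) ^ (1/2 : ℝ) = Real.sqrt (∫ s, h s ^ 2 ∂μ) :=
    (Real.sqrt_eq_rpow _).symm
  have hr2 : t ^ (1/2 : ℝ) = Real.sqrt t := (Real.sqrt_eq_rpow _).symm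
  rw [hr1, hr2] at H
  nlinarith [Real.sqrt_nonneg (∫ s, h s ^ 2 ∂μ), Real.sqrt_nonneg t,
    integral_nonneg (μ := μ) (f := h) (fun s => hpos s)]

/-- Estimate (es-nh2) for the term-by-term time derivative of the Duhamel series
solution of the non-homogeneous wave equation, in Fourier-coefficient form. -/
theorem stmt10
    (φ : HilbertBasis ℕ ℂ (Lp ℂ 2 μ01))
    (lam : ℕ → ℝ) (hlam : ∀ n, 1 ≤ lam n)
    (u₀ u₁ : Lp ℂ 2 μ01)
    (A B : ℕ → ℂ)
    (hA : ∀ n, A n = (inner ℂ u₀ (φ n) : ℂ))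
    (hB : ∀ n, B n = (inner ℂ u₁ (φ n) : ℂ))
    (T : ℝ) (hT : 0 < T)
    (f : ℝ → Lp ℂ 2 μ01) (hf : ContinuousOn f (Set.Icc 0 T))
    (hA1 : Summable fun n => lam n * ‖A n‖ ^ 2)
    (V : ℕ → ℝ → ℂ)
    (hV : ∀ n t, V n t =
      -((Real.sqrt (lam n) : ℂ)) * A n * (Real.sin (Real.sqrt (lam n) * t) : ℂ)
      + B n * (Real.cos (Real.sqrt (lam n) * t) : ℂ)
      + (Real.sin (Real.sqrt (lam n) * t) : ℂ)
          * (∫ s in (0:ℝ)..t, (Real.sin (Real.sqrt (lam n) * s) : ℂ) * (inner ℂ (f s) (φ n) : ℂ))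
      + (Real.cos (Real.sqrt (lam n) * t) : ℂ)
          * (∫ s in (0:ℝ)..t, (Real.cos (Real.sqrt (lam n) * s) : ℂ) * (inner ℂ (f s) (φ n) : ℂ)))
    (t : ℝ) (ht : t ∈ Set.Icc (0:ℝ) T) :
    Summable (fun n => ‖V n t‖ ^ 2) ∧
    ‖∑' n, V n t • φ n‖ ^ 2
      ≤ 4 * ((∑' n, lam n * ‖A n‖ ^ 2) + (∑' n, ‖B n‖ ^ 2)
          + 2 * T ^ 2 * ⨆ s : Set.Icc (0:ℝ) T, ‖f s‖ ^ 2) := by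
  obtain ⟨ht0, htT⟩ := ht
  set fn : ℕ → ℝ → ℂ := fun n s => (inner ℂ (f s) (φ n) : ℂ) with hfndef
  have hfnc : ∀ n, ContinuousOn (fn n) (Set.Icc 0 T) := fun n =>
    hf.inner continuousOn_const
  have hIcc_sub : Set.Icc (0:ℝ) t ⊆ Set.Icc 0 T := Set.Icc_subset_Icc le_rfl htT
  have huIcc : Set.uIcc (0:ℝ) t = Set.Icc 0 t := Set.uIcc_of_le ht0
  set In : ℕ → ℝ := fun n => ∫ s in (0:ℝ)..t, ‖fn n s‖ ^ 2 with hIndef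
  set Jn : ℕ → ℝ := fun n => ∫ s in (0:ℝ)..t, ‖fn n s‖ with hJndef
  have hInt_fn : ∀ n, IntervalIntegrable (fun s => ‖fn n s‖) volume 0 t := fun n =>
    ((hfnc n).norm.mono (huIcc ▸ hIcc_sub)).intervalIntegrable
  have hInt_fn2 : ∀ n, IntervalIntegrable (fun s => ‖fn n s‖ ^ 2) volume 0 t := fun n =>
    (((hfnc n).norm.pow 2).mono (huIcc ▸ hIcc_sub)).intervalIntegrable
  have hJn_nonneg : ∀ n, 0 ≤ Jn n := fun n =>
    intervalIntegral.integral_nonneg ht0 fun s _ => norm_nonneg _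
  have hIn_nonneg : ∀ n, 0 ≤ In n := fun n =>
    intervalIntegral.integral_nonneg ht0 fun s _ => sq_nonneg _
  have hJn_sq : ∀ n, Jn n ^ 2 ≤ t * In n := fun n =>
    cs_sq_integral_le ht0 ((hfnc n).norm.mono hIcc_sub) (fun s => norm_nonneg _)
  -- the sup M
  set M : ℝ := ⨆ s : Set.Icc (0:ℝ) T, ‖f s‖ ^ 2 with hMdef
  have hcontN : ContinuousOn (fun s => ‖f s‖ ^ 2) (Set.Icc 0 T) := hf.norm.pow 2
  have hbdd : BddAbove (Set.range fun s : Set.Icc (0:ℝ) T => ‖f (s:ℝ)‖ ^ 2) := by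
    have h := (isCompact_Icc.image_of_continuousOn hcontN).bddAbove
    rwa [Set.image_eq_range] at h
  have hMle : ∀ s ∈ Set.Icc (0:ℝ) T, ‖f s‖ ^ 2 ≤ M := fun s hs =>
    le_ciSup hbdd (⟨s, hs⟩ : Set.Icc (0:ℝ) T)
  have hM0 : 0 ≤ M :=
    le_trans (by positivity) (hMle 0 ⟨le_rfl, le_of_lt hT⟩)
  -- partial sums of In
  have hIf : IntervalIntegrable (fun s => ‖f s‖ ^ 2) volume 0 t :=
    (hcontN.mono (huIcc ▸ hIcc_sub)).intervalIntegrable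
  have hintf : (∫ s in (0:ℝ)..t, ‖f s‖ ^ 2) ≤ t * M := by
    calc (∫ s in (0:ℝ)..t, ‖f s‖ ^ 2) ≤ ∫ _ in (0:ℝ)..t, M :=
          intervalIntegral.integral_mono_on ht0 hIf intervalIntegrable_const
            (fun s hs => hMle s (hIcc_sub hs))
      _ = t * M := by simp [mul_comm]
  have hpartial : ∀ N : ℕ, ∑ n ∈ Finset.range N, In n ≤ t * M := by
    intro N
    have heq : ∑ n ∈ Finset.range N, In n
        = ∫ s in (0:ℝ)..t, ∑ n ∈ Finset.range N, ‖fn n s‖ ^ 2 :=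
      (intervalIntegral.integral_finset_sum (fun n _ => hInt_fn2 n)).symm
    rw [heq]
    have hii : IntervalIntegrable (fun s => ∑ n ∈ Finset.range N, ‖fn n s‖ ^ 2)
        volume 0 t := by
      have h := IntervalIntegrable.sum (μ := volume) (a := (0:ℝ)) (b := t)
        (Finset.range N) (f := fun n => fun s => ‖fn n s‖ ^ 2) (fun n _ => hInt_fn2 n)
      rwa [Finset.sum_fn] at h
    have hmono : ∀ s ∈ Set.Icc (0:ℝ) t,
        (∑ n ∈ Finset.range N, ‖fn n s‖ ^ 2) ≤ ‖f s‖ ^ 2 := by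
      intro s hs
      have hb := φ.orthonormal.sum_inner_products_le (s := Finset.range N) (f s)
      have hrw : ∀ n, ‖fn n s‖ = ‖(inner ℂ (φ n) (f s) : ℂ)‖ := fun n => by
        simp [hfndef, norm_inner_symm]
      calc ∑ n ∈ Finset.range N, ‖fn n s‖ ^ 2
          = ∑ n ∈ Finset.range N, ‖(inner ℂ (φ n) (f s) : ℂ)‖ ^ 2 :=
            Finset.sum_congr rfl fun n _ => by rw [hrw]
        _ ≤ ‖f s‖ ^ 2 := hb
    exact le_trans (intervalIntegral.integral_mono_on ht0 hii hIf hmono) hintf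
  have hIn_summ : Summable In := summable_of_sum_range_le hIn_nonneg hpartial
  have hIn_tsum : ∑' n, In n ≤ t * M := Real.tsum_le_of_sum_range_le hIn_nonneg hpartial
  -- B summable
  have hBsum : Summable (fun n => ‖B n‖ ^ 2) := by
    refine (φ.orthonormal.inner_products_summable u₁).congr fun n => ?_
    rw [hB, norm_inner_symm]
  set P : ℕ → ℝ := fun n => lam n * ‖A n‖ ^ 2 + ‖B n‖ ^ 2 + 2 * (t * In n) with hPdef
  have hPsum : Summable P :=
    (hA1.add hBsum).add (((hIn_summ.mul_left t).mul_left 2))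
  have habs_sin : ∀ x : ℝ, ‖((Real.sin x : ℝ) : ℂ)‖ ≤ 1 := fun x => by
    rw [Complex.norm_real]
    exact abs_le.2 ⟨Real.neg_one_le_sin x, Real.sin_le_one x⟩
  have habs_cos : ∀ x : ℝ, ‖((Real.cos x : ℝ) : ℂ)‖ ≤ 1 := fun x => by
    rw [Complex.norm_real]
    exact abs_le.2 ⟨Real.neg_one_le_cos x, Real.cos_le_one x⟩
  have hVle : ∀ n, ‖V n t‖ ^ 2 ≤ 4 * P n := by
    intro n
    have hl0 : (0:ℝ) ≤ lam n := le_trans zero_le_one (hlam n)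
    have hint_sin :
        ‖∫ s in (0:ℝ)..t, (Real.sin (Real.sqrt (lam n) * s) : ℂ) * fn n s‖ ≤ Jn n := by
      refine le_trans (intervalIntegral.norm_integral_le_integral_norm ht0) ?_
      refine intervalIntegral.integral_mono_on ht0 ?_ (hInt_fn n) ?_
      · have hc : ContinuousOn (fun s => (Real.sin (Real.sqrt (lam n) * s) : ℂ) * fn n s)
            (Set.Icc 0 T) :=
          ((Complex.continuous_ofReal.comp
            (Real.continuous_sin.comp (continuous_mul_left _))).continuousOn).mul (hfnc n)
        exact (hc.norm.mono (huIcc ▸ hIcc_sub)).intervalIntegrable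
      · intro s hs
        rw [norm_mul]
        exact mul_le_of_le_one_left (norm_nonneg _) (habs_sin _)
    have hint_cos :
        ‖∫ s in (0:ℝ)..t, (Real.cos (Real.sqrt (lam n) * s) : ℂ) * fn n s‖ ≤ Jn n := by
      refine le_trans (intervalIntegral.norm_integral_le_integral_norm ht0) ?_
      refine intervalIntegral.integral_mono_on ht0 ?_ (hInt_fn n) ?_
      · have hc : ContinuousOn (fun s => (Real.cos (Real.sqrt (lam n) * s) : ℂ) * fn n s)
            (Set.Icc 0 T) :=
          ((Complex.continuous_ofReal.comp
            (Real.continuous_cos.comp (continuous_mul_left _))).continuousOn).mul (hfnc n)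
        exact (hc.norm.mono (huIcc ▸ hIcc_sub)).intervalIntegrable
      · intro s hs
        rw [norm_mul]
        exact mul_le_of_le_one_left (norm_nonneg _) (habs_cos _)
    have h1 : ‖V n t‖ ≤ Real.sqrt (lam n) * ‖A n‖ + ‖B n‖ + Jn n + Jn n := by
      rw [hV]
      refine le_trans (norm_add_le _ _) ?_
      refine add_le_add (le_trans (norm_add_le _ _)
        (add_le_add (le_trans (norm_add_le _ _) (add_le_add ?_ ?_)) ?_)) ?_
      · rw [norm_mul, norm_mul, norm_neg, Complex.norm_real,
          Real.norm_eq_abs, abs_of_nonneg (Real.sqrt_nonneg _)]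
        calc Real.sqrt (lam n) * ‖A n‖ * ‖((Real.sin (Real.sqrt (lam n) * t) : ℝ) : ℂ)‖
            ≤ Real.sqrt (lam n) * ‖A n‖ * 1 := by
              refine mul_le_mul_of_nonneg_left (habs_sin _) (by positivity)
          _ = Real.sqrt (lam n) * ‖A n‖ := mul_one _
      · rw [norm_mul]
        calc ‖B n‖ * ‖((Real.cos (Real.sqrt (lam n) * t) : ℝ) : ℂ)‖
            ≤ ‖B n‖ * 1 := mul_le_mul_of_nonneg_left (habs_cos _) (norm_nonneg _)
          _ = ‖B n‖ := mul_one _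
      · rw [norm_mul]
        exact le_trans (mul_le_of_le_one_left (norm_nonneg _) (habs_sin _)) hint_sin
      · rw [norm_mul]
        exact le_trans (mul_le_of_le_one_left (norm_nonneg _) (habs_cos _)) hint_cos
    have hsq : Real.sqrt (lam n) ^ 2 = lam n := Real.sq_sqrt hl0
    have hVn0 : (0:ℝ) ≤ ‖V n t‖ := norm_nonneg _
    have h2 : ‖V n t‖ ^ 2 ≤ (Real.sqrt (lam n) * ‖A n‖ + ‖B n‖ + Jn n + Jn n) ^ 2 := by
      have h0 : (0:ℝ) ≤ Real.sqrt (lam n) * ‖A n‖ + ‖B n‖ + Jn n + Jn n :=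
        le_trans hVn0 h1
      nlinarith
    refine le_trans h2 ?_
    simp only [hPdef]
    nlinarith [hJn_sq n, hJn_nonneg n, norm_nonneg (A n), norm_nonneg (B n),
      Real.sqrt_nonneg (lam n),
      sq_nonneg (Real.sqrt (lam n) * ‖A n‖ - ‖B n‖),
      sq_nonneg (Real.sqrt (lam n) * ‖A n‖ - Jn n),
      sq_nonneg (‖B n‖ - Jn n)]
  have hsummV : Summable (fun n => ‖V n t‖ ^ 2) :=
    Summable.of_nonneg_of_le (fun n => sq_nonneg _) hVle (hPsum.mul_left 4)
  refine ⟨hsummV, ?_⟩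
  -- Parseval
  have htoReal : ((2:ENNReal)).toReal = (2:ℝ) := by norm_num
  have hrpow : ∀ x : ℝ, 0 ≤ x → x ^ ((2:ENNReal)).toReal = x ^ 2 := fun x hx => by
    rw [htoReal, show (2:ℝ) = ((2:ℕ):ℝ) by norm_num, Real.rpow_natCast]
  have hsum2 : Summable (fun n => ‖V n t‖ ^ ((2:ENNReal)).toReal) := by
    refine hsummV.congr fun n => ?_
    rw [hrpow _ (norm_nonneg _)]
  set F : lp (fun _ : ℕ => ℂ) 2 := ⟨fun n => V n t, memℓp_gen hsum2⟩ with hFdef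
  have hFsum : HasSum (fun n => V n t • φ n) (φ.repr.symm F) := φ.hasSum_repr_symm F
  rw [hFsum.tsum_eq]
  have hnorm : ‖φ.repr.symm F‖ = ‖F‖ := LinearIsometryEquiv.norm_map _ _
  have hF2 : ‖F‖ ^ 2 = ∑' n, ‖V n t‖ ^ 2 := by
    have hh := lp.norm_rpow_eq_tsum (p := 2) (by norm_num) F
    rw [hrpow _ (norm_nonneg F)] at hh
    rw [hh]
    exact tsum_congr fun n => hrpow _ (norm_nonneg _)
  rw [hnorm, hF2]
  -- final estimates
  have hts : ∑' n, ‖V n t‖ ^ 2 ≤ ∑' n, 4 * P n :=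
    Summable.tsum_le_tsum hVle hsummV (hPsum.mul_left 4)
  rw [tsum_mul_left] at hts
  have hPts : ∑' n, P n
      = (∑' n, lam n * ‖A n‖ ^ 2) + (∑' n, ‖B n‖ ^ 2) + 2 * (t * ∑' n, In n) := by
    rw [hPdef]
    rw [Summable.tsum_add (hA1.add hBsum) ((hIn_summ.mul_left t).mul_left 2),
      Summable.tsum_add hA1 hBsum, tsum_mul_left, tsum_mul_left]
  have hfinal : 2 * (t * ∑' n, In n) ≤ 2 * T ^ 2 * M := by
    have h1 : ∑' n, In n ≤ T * M := le_trans hIn_tsum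
      (mul_le_mul_of_nonneg_right htT hM0)
    have h2 : (0:ℝ) ≤ ∑' n, In n := tsum_nonneg hIn_nonneg
    nlinarith
  refine le_trans hts ?_
  rw [hPts]
  have hAts : (0:ℝ) ≤ ∑' n, lam n * ‖A n‖ ^ 2 := tsum_nonneg fun n => mul_nonneg (le_trans zero_le_one (hlam n)) (sq_nonneg _)
  nlinarith
end
end
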